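/- Let X be a partially ordered vector space and let P be a linear projection on X with P and Q := I - P positive. If a positive vector x is disjoint to every positive vector in Q(X), then Qx = 0, i.e. x ∈ P(X). -/

import Mathlib

/-- Two vectors are disjoint: the upper bounds of {x+y, -x-y} equal those of {x-y, y-x}. -/
def Disj {X : Type*} [AddCommGroup X] [PartialOrder X] (x y : X) : Prop :=
  upperBounds ({x + y, -x - y} : Set X) = upperBounds ({x - y, y - x} : Set X)

theorem mem_range_of_disjoint_to_complement {X : Type*} [AddCommGroup X] [PartialOrder X] [IsOrderedAddMonoid X] [Module ℝ X]
    [PosSMulStrictMono ℝ X] [PosSMulReflectLT ℝ X]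
    (P : X →ₗ[ℝ] X) (hP : P ∘ₗ P = P)
    (hPpos : ∀ x : X, 0 ≤ x → 0 ≤ P x)
    (hQpos : ∀ x : X, 0 ≤ x → 0 ≤ x - P x)
    (x : X) (hxpos : 0 ≤ x)
    (hdisj : ∀ y : X, 0 ≤ y → y ∈ Set.range (LinearMap.id - P : X →ₗ[ℝ] X) → Disj x y) :
    (LinearMap.id - P : X →ₗ[ℝ] X) x = 0 ∧ x ∈ Set.range P := by
  set q := x - P x with hq
  have hQx : (LinearMap.id - P : X →ₗ[ℝ] X) x = q := by simp [hq]
  have hqpos : 0 ≤ q := hQpos x hxpos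
  have hppos : 0 ≤ P x := hPpos x hxpos
  have hd : Disj x q := hdisj q hqpos ⟨x, hQx⟩
  -- P x = x - q is an upper bound of {x - q, q - x}
  have hmem : P x ∈ upperBounds ({x - q, q - x} : Set X) := by
    intro z hz
    rcases hz with rfl | hz
    · have h1 : x - q = P x := by rw [hq]; abel
      rw [h1]
    · simp only [Set.mem_singleton_iff] at hz
      subst hz
      have h1 : q - x = -(P x) := by rw [hq]; abel
      rw [h1]
      exact (neg_nonpos_of_nonneg hppos).trans hppos
  unfold Disj at hd
  rw [← hd] at hmem
  have hle : x + q ≤ P x := hmem (by left; rfl)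
  have hle2 : q + q ≤ 0 := by
    have hpx : P x = x - q := by rw [hq]; abel
    rw [hpx] at hle
    have h1 : q ≤ -q := by
      have := sub_le_sub_right hle x
      simpa [sub_eq_add_neg, add_comm] using this
    have := add_le_add_right h1 q
    simpa using this
  have hq0 : q = 0 :=
    le_antisymm ((le_add_of_nonneg_left hqpos).trans hle2) hqpos
  refine ⟨by rw [hQx, hq0], ⟨x, ?_⟩⟩
  have h := hq0
  rw [hq, sub_eq_zero] at h
  exact h.symm
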